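/- For every integer k ≥ 1, every real α ≥ 1, and every β with 0 ≤ β < 2k − 1, the discrete absolute moment m_β(J_k) := sup_{u ∈ ℝ} ∑_{j ∈ ℤ} |J_k(u − j)| · |u − j|^β of the univariate Jackson-type kernel J_k is finite. -/

import Mathlib

open MeasureTheory Filter

open Real in
/-- The cardinal sine function `sinc x = sin (π x) / (π x)`, with `sinc 0 = 1`. -/
noncomputable def sinc (x : ℝ) : ℝ :=
  if x = 0 then 1 else Real.sin (π * x) / (π * x)

open Real in
/-- The univariate Fejér kernel. -/
noncomputable def fejer (x : ℝ) : ℝ := (1 / 2) * _root_.sinc (x / 2) ^ 2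

open Real in
/-- The univariate Jackson-type kernel of order `k` with parameter `α`. -/
noncomputable def jackson (k : ℕ) (α : ℝ) (x : ℝ) : ℝ :=
  (∫ u : ℝ, _root_.sinc (u / (2 * k * π * α)) ^ (2 * k))⁻¹ * _root_.sinc (x / (2 * k * π * α)) ^ (2 * k)

/-- Discrete absolute moment of order `β` of a univariate function. -/
noncomputable def mom1 (χ : ℝ → ℝ) (β : ℝ) : ENNReal :=
  ⨆ u : ℝ, ∑' k : ℤ, ENNReal.ofReal (|χ (u - (k : ℝ))| * |u - (k : ℝ)| ^ β)

open Real

lemma abs_sinc_le_one (y : ℝ) : |_root_.sinc y| ≤ 1 := by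
  unfold _root_.sinc
  split_ifs with h
  · simp
  · rw [abs_div]
    have hπy : π * y ≠ 0 := mul_ne_zero Real.pi_ne_zero h
    rw [div_le_one (abs_pos.mpr hπy)]
    exact Real.abs_sin_le_abs

lemma abs_sinc_le (y : ℝ) (h : y ≠ 0) : |_root_.sinc y| ≤ 1 / (π * |y|) := by
  unfold _root_.sinc
  rw [if_neg h, abs_div, abs_mul, abs_of_pos Real.pi_pos]
  gcongr
  exact Real.abs_sin_le_one _

/-- Main pointwise bound: `|sinc (x / (π * B))| ≤ (1 + B) / (1 + |x|)` for `B > 0`. -/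
lemma abs_sinc_div_le (B x : ℝ) (hB : 0 < B) :
    |_root_.sinc (x / (π * B))| ≤ (1 + B) / (1 + |x|) := by
  have h1x : (0:ℝ) < 1 + |x| := by positivity
  rcases le_or_gt |x| B with hxB | hxB
  · calc |_root_.sinc (x / (π * B))| ≤ 1 := abs_sinc_le_one _
      _ ≤ (1 + B) / (1 + |x|) := by
        rw [le_div_iff₀ h1x]; linarith
  · have hx0 : x ≠ 0 := by
      intro h; rw [h, abs_zero] at hxB; linarith
    have hd : x / (π * B) ≠ 0 := by
      apply div_ne_zero hx0 (mul_ne_zero Real.pi_ne_zero hB.ne')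
    calc |_root_.sinc (x / (π * B))| ≤ 1 / (π * |x / (π * B)|) := abs_sinc_le _ hd
      _ = B / |x| := by
          rw [abs_div, abs_mul, abs_of_pos Real.pi_pos, abs_of_pos hB]
          field_simp
      _ ≤ (1 + B) / (1 + |x|) := by
        rw [div_le_div_iff₀ (abs_pos.mpr hx0) h1x]
        nlinarith [abs_pos.mpr hx0]

theorem stmt13 (k : ℕ) (hk : 1 ≤ k) (α : ℝ) (hα : 1 ≤ α)
    (β : ℝ) (hβ0 : 0 ≤ β) (hβ1 : β < 2 * k - 1) :
    mom1 (jackson k α) β < ⊤ := by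
  have hπ := Real.pi_pos
  set B : ℝ := 2 * k * α with hBdef
  have hB : 0 < B := by
    have : (1:ℝ) ≤ (k:ℝ) := by exact_mod_cast hk
    positivity
  have hB1 : (0:ℝ) < 1 + B := by linarith
  set c : ℝ := |(∫ u : ℝ, _root_.sinc (u / (2 * k * π * α)) ^ (2 * k))⁻¹| with hc
  have hc0 : 0 ≤ c := abs_nonneg _
  set s : ℝ := 2 * k - β with hs
  have hs1 : 1 < s := by simp only [hs]; linarith
  set K : ℝ := c * (1 + B) ^ (2 * k) * 2 ^ s with hK
  have hK0 : 0 ≤ K := by positivity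
  -- the dominating summable function
  set g : ℤ → ℝ := fun m => K * (1 + |(m : ℝ)|) ^ (-s) with hg
  have hgnn : ∀ m, 0 ≤ g m := by
    intro m
    apply mul_nonneg hK0 (Real.rpow_nonneg (by positivity) _)
  have hgsum : Summable g := by
    apply Summable.mul_left
    apply Summable.of_norm_bounded_eventually (g := fun m : ℤ => |(m:ℝ)| ^ (-s))
      (Real.summable_abs_int_rpow hs1)
    have : ({0} : Set ℤ).Finite := Set.finite_singleton 0
    filter_upwards [this.compl_mem_cofinite] with m hm
    simp only [Set.mem_compl_iff, Set.mem_singleton_iff] at hm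
    have hm1 : (1:ℝ) ≤ |(m:ℝ)| := by
      rw [← Int.cast_abs]; exact_mod_cast Int.one_le_abs hm
    rw [Real.norm_eq_abs, abs_of_nonneg (Real.rpow_nonneg (by positivity) _)]
    exact Real.rpow_le_rpow_of_nonpos (by linarith) (by linarith) (by linarith)
  -- the key pointwise bound
  have key : ∀ (u : ℝ) (j : ℤ),
      |jackson k α (u - j)| * |u - (j:ℝ)| ^ β ≤ g (j - round u) := by
    intro u j
    set x : ℝ := u - j with hx
    have h1x : (0:ℝ) < 1 + |x| := by positivity
    have hdiv : x / (2 * k * π * α) = x / (π * B) := by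
      rw [hBdef]; ring_nf
    have hsinc : |_root_.sinc (x / (2 * k * π * α))| ≤ (1 + B) / (1 + |x|) := by
      rw [hdiv]; exact abs_sinc_div_le B x hB
    have step1 : |jackson k α x| * |x| ^ β
        ≤ c * ((1 + B) / (1 + |x|)) ^ (2 * k) * (1 + |x|) ^ β := by
      rw [jackson, abs_mul, abs_pow, ← hc]
      apply mul_le_mul
      · apply mul_le_mul_of_nonneg_left _ hc0
        exact pow_le_pow_left₀ (abs_nonneg _) hsinc _
      · exact Real.rpow_le_rpow (abs_nonneg _) (by linarith) hβ0
      · exact Real.rpow_nonneg (abs_nonneg _) _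
      · positivity
    have step2 : c * ((1 + B) / (1 + |x|)) ^ (2 * k) * (1 + |x|) ^ β
        = c * (1 + B) ^ (2 * k) * (1 + |x|) ^ (-s) := by
      rw [div_pow]
      have hnp : ((1 + |x|) ^ (2 * k) : ℝ) = (1 + |x|) ^ ((2 * k : ℕ) : ℝ) := by
        rw [Real.rpow_natCast]
      rw [mul_assoc, mul_assoc, div_mul_eq_mul_div, ← Real.rpow_natCast (1 + |x|) (2*k),
        div_eq_mul_inv, ← Real.rpow_neg h1x.le, mul_assoc, ← Real.rpow_add h1x]
      congr 2
      push_cast [hs]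
      ring
    have hround : (1 + |((j - round u : ℤ) : ℝ)|) / 2 ≤ 1 + |x| := by
      have h1 : |u - round u| ≤ 1/2 := by
        have := abs_sub_round u
        simpa using this
      have h2 : |((j - round u : ℤ) : ℝ)| = |(j:ℝ) - round u| := by push_cast; ring_nf
      have h3 : |(j:ℝ) - round u| ≤ |x| + |u - round u| := by
        have : (j:ℝ) - round u = (u - round u) - x := by rw [hx]; ring
        rw [this]
        calc |(u - round u) - x| ≤ |u - round u| + |x| := abs_sub _ _
          _ = |x| + |u - round u| := by ring
      rw [h2]; linarith [abs_nonneg x]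
    have step3 : (1 + |x|) ^ (-s) ≤ 2 ^ s * (1 + |((j - round u : ℤ) : ℝ)|) ^ (-s) := by
      have hm0 : (0:ℝ) < (1 + |((j - round u : ℤ) : ℝ)|) / 2 := by positivity
      calc (1 + |x|) ^ (-s) ≤ ((1 + |((j - round u : ℤ) : ℝ)|) / 2) ^ (-s) :=
            Real.rpow_le_rpow_of_nonpos hm0 hround (by linarith)
        _ = 2 ^ s * (1 + |((j - round u : ℤ) : ℝ)|) ^ (-s) := by
            rw [Real.div_rpow (by positivity) (by norm_num),
              Real.rpow_neg (by norm_num : (0:ℝ) ≤ 2) s, div_eq_mul_inv, inv_inv, mul_comm]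
    calc |jackson k α x| * |x| ^ β
        ≤ c * (1 + B) ^ (2 * k) * (1 + |x|) ^ (-s) := by rw [← step2]; exact step1
      _ ≤ c * (1 + B) ^ (2 * k) * (2 ^ s * (1 + |((j - round u : ℤ) : ℝ)|) ^ (-s)) := by
          apply mul_le_mul_of_nonneg_left step3 (by positivity)
      _ = g (j - round u) := by rw [hg, hK]; ring
  -- assemble
  have hM : (∑' m : ℤ, ENNReal.ofReal (g m)) < ⊤ := by
    rw [← ENNReal.ofReal_tsum_of_nonneg hgnn hgsum]
    exact ENNReal.ofReal_lt_top
  refine lt_of_le_of_lt ?_ hM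
  rw [mom1]
  apply iSup_le
  intro u
  calc (∑' j : ℤ, ENNReal.ofReal (|jackson k α (u - j)| * |u - (j:ℝ)| ^ β))
      ≤ ∑' j : ℤ, ENNReal.ofReal (g (j - round u)) :=
        ENNReal.tsum_le_tsum fun j => ENNReal.ofReal_le_ofReal (key u j)
    _ = ∑' m : ℤ, ENNReal.ofReal (g m) := by
        exact (Equiv.subRight (round u : ℤ)).tsum_eq fun m => ENNReal.ofReal (g m)
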